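/- Let μ^{(n)} = |Λ|^{−n} Σ_{i∈Λ^n} δ_{f_i(0)} for an IFS with common ratio 0 < r < 1 and 0 ∈ X ⊆ [0,1), and set s_n = H(μ^{(n)}, I_{r^n}), the Shannon entropy with respect to the partition into intervals of length r^n. Then there is a constant C with s_{m+n} ≥ s_m + s_n − C for all m, n, and hence the limit α = lim_n s_n/(n log(1/r)) exists. -/

import Mathlib

open Set Filter MeasureTheory

/-- Composition `f_{i_1} ∘ ⋯ ∘ f_{i_n}` of the maps along a finite word. -/
def wordComp {Λ : Type*} (f : Λ → ℝ → ℝ) : (n : ℕ) → (Fin n → Λ) → ℝ → ℝ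
  | 0, _, x => x
  | n + 1, i, x => f (i 0) (wordComp f n (fun k => i k.succ) x)

/-- `μ⁽ⁿ⁾ = |Λ|^{−n} Σ_{i∈Λⁿ} δ_{f_i(0)}`. -/
noncomputable def μiter {Λ : Type*} [Fintype Λ] (f : Λ → ℝ → ℝ) (n : ℕ) :
    Measure ℝ :=
  ((Fintype.card Λ : ENNReal) ^ n)⁻¹ •
    ∑ i : Fin n → Λ, Measure.dirac (wordComp f n i 0)

/-- The entropy of `ν` with respect to the partition `I_ε` of `ℝ` into
intervals `[kε, (k+1)ε)`. -/
noncomputable def entI (ν : Measure ℝ) (ε : ℝ) : ℝ :=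
  ∑' k : ℤ, Real.negMulLog ((ν (Set.Ico ((k : ℝ) * ε) (((k : ℝ) + 1) * ε))).toReal)

set_option linter.unusedSectionVars false
set_option linter.unusedVariables false

open Finset Real

namespace EntropyAux

/-- Log-sum inequality (unnormalized Gibbs). -/
lemma logSum {ι : Type*} (t : Finset ι) (p b : ι → ℝ)
    (hp : ∀ i ∈ t, 0 ≤ p i) (hb : ∀ i ∈ t, 0 ≤ b i)
    (hpb : ∀ i ∈ t, b i = 0 → p i = 0) :
    (∑ i ∈ t, p i) * Real.log ((∑ i ∈ t, p i) / (∑ i ∈ t, b i)) ≤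
      ∑ i ∈ t, p i * Real.log (p i / b i) := by
  classical
  set t' : Finset ι := t.filter (fun i => 0 < b i) with ht'
  have hsub : t' ⊆ t := filter_subset _ _
  have hp0 : ∀ i ∈ t, i ∉ t' → p i = 0 := by
    intro i hi hi'
    have hbi : ¬ 0 < b i := by simpa [ht', hi] using hi'
    exact hpb i hi (le_antisymm (not_lt.1 hbi) (hb i hi))
  have hPsum : ∑ i ∈ t, p i = ∑ i ∈ t', p i := by
    refine (Finset.sum_subset hsub ?_).symm
    intro i hi hi'; exact hp0 i hi hi'
  have hRHSsum : ∑ i ∈ t, p i * Real.log (p i / b i)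
      = ∑ i ∈ t', p i * Real.log (p i / b i) := by
    refine (Finset.sum_subset hsub ?_).symm
    intro i hi hi'; rw [hp0 i hi hi']; ring
  set P := ∑ i ∈ t, p i with hP
  set B := ∑ i ∈ t, b i with hB
  set B' := ∑ i ∈ t', b i with hB'
  have hB'leB : B' ≤ B := Finset.sum_le_sum_of_subset_of_nonneg hsub
    (fun i hi _ => hb i hi)
  have hPnonneg : 0 ≤ P := Finset.sum_nonneg hp
  rcases eq_or_lt_of_le hPnonneg with hP0 | hPpos
  · -- P = 0 : all p i = 0
    have hall : ∀ i ∈ t, p i = 0 := by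
      intro i hi
      exact le_antisymm (by
        have := Finset.single_le_sum hp hi
        simpa [← hP, ← hP0] using this) (hp i hi)
    have : ∑ i ∈ t, p i * Real.log (p i / b i) = 0 := by
      refine Finset.sum_eq_zero fun i hi => by rw [hall i hi]; ring
    rw [this, ← hP0]; simp
  · -- P > 0
    have ht'ne : t'.Nonempty := by
      by_contra h
      rw [Finset.not_nonempty_iff_eq_empty] at h
      rw [hPsum, h] at hPpos; simp at hPpos
    have hB'pos : 0 < B' := by
      obtain ⟨i, hi⟩ := ht'ne
      have hbi : 0 < b i := (Finset.mem_filter.1 hi).2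
      calc (0:ℝ) < b i := hbi
        _ ≤ B' := Finset.single_le_sum (fun j hj => hb j (hsub hj)) hi
    -- Jensen with f = x log x, weights b i / B', points p i / b i on t'
    have hjensen := Real.convexOn_mul_log.map_sum_le (t := t')
      (w := fun i => b i / B') (p := fun i => p i / b i)
      (fun i hi => div_nonneg (hb i (hsub hi)) hB'pos.le)
      (by rw [← Finset.sum_div]; field_simp; exact hB'.symm)
      (fun i hi => div_nonneg (hp i (hsub hi)) (hb i (hsub hi)))
    have hptsum : ∑ i ∈ t', (b i / B') • (p i / b i) = P / B' := by
      rw [hPsum]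
      rw [Finset.sum_congr rfl (fun i hi => show (b i / B') • (p i / b i) = p i / B' by
        have hbi : 0 < b i := (Finset.mem_filter.1 hi).2
        rw [smul_eq_mul]; field_simp), ← Finset.sum_div]
    rw [hptsum] at hjensen
    -- multiply by B'
    have hmul : P * Real.log (P / B') ≤ ∑ i ∈ t', p i * Real.log (p i / b i) := by
      have h2 : B' * ((P / B') * Real.log (P / B'))
          ≤ B' * (∑ i ∈ t', (b i / B') • ((p i / b i) * Real.log (p i / b i))) :=
        mul_le_mul_of_nonneg_left hjensen hB'pos.le
      calc P * Real.log (P / B') = B' * ((P / B') * Real.log (P / B')) := by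
            field_simp
        _ ≤ B' * (∑ i ∈ t', (b i / B') • ((p i / b i) * Real.log (p i / b i))) := h2
        _ = ∑ i ∈ t', p i * Real.log (p i / b i) := by
            rw [Finset.mul_sum]
            refine Finset.sum_congr rfl fun i hi => ?_
            have hbi : 0 < b i := (Finset.mem_filter.1 hi).2
            field_simp [smul_eq_mul]
            have e1 : B' * B'⁻¹ = 1 := mul_inv_cancel₀ hB'pos.ne'
            have e2 : b i * (b i)⁻¹ = 1 := mul_inv_cancel₀ hbi.ne'
            ring_nf
            linear_combination (p i * Real.log (p i * (b i)⁻¹) * (b i * (b i)⁻¹)) * e1 + (p i * Real.log (p i * (b i)⁻¹)) * e2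
    rw [hRHSsum]
    refine le_trans ?_ hmul
    -- P log (P/B) ≤ P log (P/B')
    refine mul_le_mul_of_nonneg_left ?_ hPnonneg
    have h1 : P / B ≤ P / B' := div_le_div_of_nonneg_left hPnonneg hB'pos hB'leB
    have hBpos : 0 < B := lt_of_lt_of_le hB'pos hB'leB
    exact Real.log_le_log (div_pos hPpos hBpos) h1

/-- Lemma B: refinement increases entropy. -/
lemma negMulLog_sum_le {ι : Type*} (t : Finset ι) (p : ι → ℝ)
    (hp : ∀ i ∈ t, 0 ≤ p i) :
    Real.negMulLog (∑ i ∈ t, p i) ≤ ∑ i ∈ t, Real.negMulLog (p i) := by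
  classical
  set P := ∑ i ∈ t, p i with hP
  have hPnonneg : 0 ≤ P := Finset.sum_nonneg hp
  have : Real.negMulLog P = ∑ i ∈ t, -(p i * Real.log P) := by
    rw [Real.negMulLog, neg_mul, hP, Finset.sum_mul, ← Finset.sum_neg_distrib]
  rw [this]
  refine Finset.sum_le_sum fun i hi => ?_
  rw [Real.negMulLog, neg_mul]
  rcases eq_or_lt_of_le (hp i hi) with h0 | h0
  · rw [← h0]; simp
  · have : Real.log (p i) ≤ Real.log P :=
      Real.log_le_log h0 (Finset.single_le_sum hp hi)
    nlinarith
/-- Lemma A: entropy bounded by log of cardinality. -/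
lemma sum_negMulLog_le {ι : Type*} (t : Finset ι) (p : ι → ℝ)
    (hp : ∀ i ∈ t, 0 ≤ p i) (K : ℕ) (hK : t.card ≤ K) (hK1 : 1 ≤ K) :
    ∑ i ∈ t, Real.negMulLog (p i) ≤
      Real.negMulLog (∑ i ∈ t, p i) + (∑ i ∈ t, p i) * Real.log K := by
  classical
  have hls := logSum t p (fun _ => 1) hp (fun i _ => zero_le_one)
    (fun i _ h => absurd h one_ne_zero)
  set P := ∑ i ∈ t, p i with hP
  have hPnonneg : 0 ≤ P := Finset.sum_nonneg hp
  have hsum1 : ∑ i ∈ t, (1:ℝ) = (t.card : ℝ) := by simp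
  rw [hsum1] at hls
  have hmain : P * Real.log (P / K) ≤ ∑ i ∈ t, p i * Real.log (p i) := by
    rcases eq_or_lt_of_le hPnonneg with h0 | h0
    · have hall : ∀ i ∈ t, p i = 0 := fun i hi =>
        le_antisymm (by
          have := Finset.single_le_sum hp hi
          simpa [← hP, ← h0] using this) (hp i hi)
      rw [← h0, Finset.sum_congr rfl (fun i hi => by rw [hall i hi]), zero_mul]
      simp
    · have htne : t.Nonempty := by
        by_contra h
        rw [Finset.not_nonempty_iff_eq_empty] at h
        rw [hP, h] at h0; simp at h0
      have hcard : (0:ℝ) < t.card := by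
        exact_mod_cast Finset.card_pos.mpr htne
      have h1 : P / (K:ℝ) ≤ P / (t.card : ℝ) :=
        div_le_div_of_nonneg_left hPnonneg hcard (by exact_mod_cast hK)
      have hKpos : (0:ℝ) < K := by exact_mod_cast lt_of_lt_of_le Nat.one_pos hK1
      calc P * Real.log (P / K) ≤ P * Real.log (P / t.card) :=
            mul_le_mul_of_nonneg_left (Real.log_le_log (div_pos h0 hKpos) h1) hPnonneg
        _ ≤ ∑ i ∈ t, p i * Real.log (p i) := by
            refine le_trans hls (Finset.sum_le_sum fun i hi => ?_)
            rcases eq_or_lt_of_le (hp i hi) with hpi | hpi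
            · rw [← hpi]; simp
            · rw [div_one]
  have hexp : P * Real.log (P / K) = P * Real.log P - P * Real.log K := by
    rcases eq_or_lt_of_le hPnonneg with h0 | h0
    · rw [← h0]; ring
    · rw [Real.log_div h0.ne' (by positivity), mul_sub]
  rw [hexp] at hmain
  have : ∑ i ∈ t, Real.negMulLog (p i) = -∑ i ∈ t, p i * Real.log (p i) := by
    rw [← Finset.sum_neg_distrib]
    exact Finset.sum_congr rfl fun i hi => by rw [Real.negMulLog]; ring
  rw [this, Real.negMulLog]
  nlinarith [hmain]

section dent

variable {Ω : Type*} [Fintype Ω] {S : Type*} {T : Type*} {R : Type*}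
variable [DecidableEq S] [DecidableEq T] [DecidableEq R]

/-- Entropy of the partition of `t` induced by `φ`, with weights `w`. -/
noncomputable def dentOn (t : Finset Ω) (w : Ω → ℝ) (φ : Ω → S) : ℝ :=
  ∑ s ∈ t.image φ, Real.negMulLog (∑ ω ∈ t.filter (fun ω => φ ω = s), w ω)

noncomputable def dent (w : Ω → ℝ) (φ : Ω → S) : ℝ := dentOn Finset.univ w φ

lemma mass_total (t : Finset Ω) (w : Ω → ℝ) (φ : Ω → S) :
    ∑ s ∈ t.image φ, ∑ ω ∈ t.filter (fun ω => φ ω = s), w ω = ∑ ω ∈ t, w ω :=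
  Finset.sum_fiberwise_of_maps_to (fun x hx => Finset.mem_image_of_mem φ hx) w

lemma mass_nonneg (t : Finset Ω) (w : Ω → ℝ) (hw : ∀ ω, 0 ≤ w ω) (φ : Ω → S) (s : S) :
    0 ≤ ∑ ω ∈ t.filter (fun ω => φ ω = s), w ω :=
  Finset.sum_nonneg fun ω _ => hw ω

/-- Entropy decreases under post-composition (coarsening). -/
lemma dent_mono (w : Ω → ℝ) (hw : ∀ ω, 0 ≤ w ω) (φ : Ω → S) (ψ : Ω → T) (g : T → S)
    (hg : ∀ ω, φ ω = g (ψ ω)) : dent w φ ≤ dent w ψ := by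
  classical
  unfold dent dentOn
  have key : ∀ s ∈ Finset.univ.image φ,
      Real.negMulLog (∑ ω ∈ Finset.univ.filter (fun ω => φ ω = s), w ω) ≤
        ∑ c ∈ (Finset.univ.image ψ).filter (fun c => g c = s),
          Real.negMulLog (∑ ω ∈ Finset.univ.filter (fun ω => ψ ω = c), w ω) := by
    intro s _
    have hdecomp : ∑ ω ∈ Finset.univ.filter (fun ω => φ ω = s), w ω =
        ∑ c ∈ (Finset.univ.image ψ).filter (fun c => g c = s),
          ∑ ω ∈ Finset.univ.filter (fun ω => ψ ω = c), w ω := by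
      rw [← Finset.sum_fiberwise_of_maps_to (g := ψ)
        (t := (Finset.univ.image ψ).filter (fun c => g c = s))
        (fun ω hω => by
          simp only [Finset.mem_filter, Finset.mem_image] at hω ⊢
          exact ⟨⟨ω, Finset.mem_univ ω, rfl⟩, by rw [← hg ω]; exact hω.2⟩) w]
      refine Finset.sum_congr rfl fun c hc => ?_
      simp only [Finset.mem_filter] at hc
      rw [Finset.filter_filter]
      refine Finset.sum_congr (Finset.filter_congr fun ω _ => ?_) fun _ _ => rfl
      constructor
      · rintro ⟨_, h2⟩; exact h2
      · intro h2; exact ⟨by rw [hg ω, h2, hc.2], h2⟩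
    rw [hdecomp]
    exact negMulLog_sum_le _ _ (fun c _ => mass_nonneg _ _ hw _ _)
  calc ∑ s ∈ Finset.univ.image φ,
        Real.negMulLog (∑ ω ∈ Finset.univ.filter (fun ω => φ ω = s), w ω)
      ≤ ∑ s ∈ Finset.univ.image φ,
        ∑ c ∈ (Finset.univ.image ψ).filter (fun c => g c = s),
          Real.negMulLog (∑ ω ∈ Finset.univ.filter (fun ω => ψ ω = c), w ω) :=
        Finset.sum_le_sum key
    _ = ∑ c ∈ Finset.univ.image ψ,
          Real.negMulLog (∑ ω ∈ Finset.univ.filter (fun ω => ψ ω = c), w ω) := by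
        refine Finset.sum_fiberwise_of_maps_to (fun c hc => ?_) _
        simp only [Finset.mem_image] at hc ⊢
        obtain ⟨ω, _, rfl⟩ := hc
        exact ⟨ω, Finset.mem_univ ω, hg ω⟩

/-- Entropy is invariant under relabelling. -/
lemma dent_congr (w : Ω → ℝ) (hw : ∀ ω, 0 ≤ w ω) (φ : Ω → S) (ψ : Ω → T)
    (g : T → S) (hg : ∀ ω, φ ω = g (ψ ω)) (g' : S → T) (hg' : ∀ ω, ψ ω = g' (φ ω)) :
    dent w φ = dent w ψ :=
  le_antisymm (dent_mono w hw φ ψ g hg) (dent_mono w hw ψ φ g' hg')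

/-- Decomposition of the entropy of a pair over the fibers of the first coordinate. -/
lemma dent_pair_decomp (w : Ω → ℝ) (A : Ω → T) (ψ : Ω → S) :
    dent w (fun ω => (A ω, ψ ω)) =
      ∑ a ∈ Finset.univ.image A, dentOn (Finset.univ.filter (fun ω => A ω = a)) w ψ := by
  classical
  unfold dent dentOn
  rw [← Finset.sum_fiberwise_of_maps_to (g := Prod.fst)
    (t := Finset.univ.image A) (fun p hp => by
      simp only [Finset.mem_image] at hp ⊢
      obtain ⟨ω, _, rfl⟩ := hp
      exact ⟨ω, Finset.mem_univ ω, rfl⟩)]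
  refine Finset.sum_congr rfl fun a ha => ?_
  refine Finset.sum_nbij' (i := fun p => p.2) (j := fun c => (a, c)) ?_ ?_ ?_ ?_ ?_
  · intro p hp
    simp only [Finset.mem_filter, Finset.mem_image] at hp ⊢
    obtain ⟨⟨ω, _, hω⟩, h1⟩ := hp
    refine ⟨ω, ?_, ?_⟩
    · simp only [Finset.mem_filter, Finset.mem_univ, true_and]
      rw [show A ω = (A ω, ψ ω).1 from rfl, hω, h1]
    · rw [show ψ ω = (A ω, ψ ω).2 from rfl, hω]
  · intro c hc
    obtain ⟨ω, hω, rfl⟩ := Finset.mem_image.1 hc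
    have hA : A ω = a := (Finset.mem_filter.1 hω).2
    refine Finset.mem_filter.2 ⟨Finset.mem_image.2 ⟨ω, Finset.mem_univ ω, by rw [hA]⟩, rfl⟩
  · intro p hp
    simp only [Finset.mem_filter] at hp
    rw [← hp.2]
  · intro c _; rfl
  · intro p hp
    simp only [Finset.mem_filter] at hp
    congr 1
    rw [Finset.filter_filter]
    refine Finset.sum_congr (Finset.filter_congr fun ω _ => ?_) fun _ _ => rfl
    rw [← hp.2, Prod.ext_iff]
lemma dentOn_le (t : Finset Ω) (w : Ω → ℝ) (hw : ∀ ω, 0 ≤ w ω) (ψ : Ω → S)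
    (K : ℕ) (hK1 : 1 ≤ K) (hcard : (t.image ψ).card ≤ K) :
    dentOn t w ψ ≤ Real.negMulLog (∑ ω ∈ t, w ω) + (∑ ω ∈ t, w ω) * Real.log K := by
  have h := sum_negMulLog_le (t.image ψ)
    (fun s => ∑ ω ∈ t.filter (fun ω => ψ ω = s), w ω)
    (fun s _ => mass_nonneg _ _ hw _ _) K hcard hK1
  rwa [mass_total] at h

lemma dent_pair_le (w : Ω → ℝ) (hw : ∀ ω, 0 ≤ w ω) (φ : Ω → S) (ψ : Ω → T)
    (K : ℕ) (hK1 : 1 ≤ K)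
    (hfib : ∀ s : S, ∃ Tf : Finset T, Tf.card ≤ K ∧ ∀ ω, φ ω = s → ψ ω ∈ Tf) :
    dent w (fun ω => (φ ω, ψ ω)) ≤ dent w φ + (∑ ω, w ω) * Real.log K := by
  classical
  rw [dent_pair_decomp w φ ψ]
  have key : ∀ s ∈ Finset.univ.image φ,
      dentOn (Finset.univ.filter (fun ω => φ ω = s)) w ψ ≤
        Real.negMulLog (∑ ω ∈ Finset.univ.filter (fun ω => φ ω = s), w ω) +
          (∑ ω ∈ Finset.univ.filter (fun ω => φ ω = s), w ω) * Real.log K := by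
    intro s _
    obtain ⟨Tf, hTf, hmem⟩ := hfib s
    refine dentOn_le _ w hw ψ K hK1 (le_trans (Finset.card_le_card ?_) hTf)
    intro c hc
    obtain ⟨ω, hω, rfl⟩ := Finset.mem_image.1 hc
    exact hmem ω (Finset.mem_filter.1 hω).2
  calc ∑ a ∈ Finset.univ.image φ, dentOn (Finset.univ.filter (fun ω => φ ω = a)) w ψ
      ≤ ∑ a ∈ Finset.univ.image φ,
          (Real.negMulLog (∑ ω ∈ Finset.univ.filter (fun ω => φ ω = a), w ω) +
            (∑ ω ∈ Finset.univ.filter (fun ω => φ ω = a), w ω) * Real.log K) :=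
        Finset.sum_le_sum key
    _ = dent w φ + (∑ ω, w ω) * Real.log K := by
        rw [Finset.sum_add_distrib, ← Finset.sum_mul, mass_total]
        rfl

/-- Unnormalized subadditivity of entropy (the `†` inequality). -/
lemma dentOn_pair_ge (t : Finset Ω) (w : Ω → ℝ) (hw : ∀ ω, 0 ≤ w ω)
    (φ : Ω → S) (ψ : Ω → T) :
    dentOn t w (fun ω => (φ ω, ψ ω)) + Real.negMulLog (∑ ω ∈ t, w ω) ≤
      dentOn t w φ + dentOn t w ψ := by
  classical
  set P := t.image (fun ω => (φ ω, ψ ω)) with hPdef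
  set q : S × T → ℝ := fun p => ∑ ω ∈ t.filter (fun ω => (φ ω, ψ ω) = p), w ω with hqdef
  set mφ : S → ℝ := fun s => ∑ ω ∈ t.filter (fun ω => φ ω = s), w ω with hmφdef
  set mψ : T → ℝ := fun c => ∑ ω ∈ t.filter (fun ω => ψ ω = c), w ω with hmψdef
  set W := ∑ ω ∈ t, w ω with hWdef
  have hq0 : ∀ p, 0 ≤ q p := fun p => mass_nonneg _ _ hw _ _
  have hmφ0 : ∀ s, 0 ≤ mφ s := fun s => mass_nonneg _ _ hw _ _
  have hmψ0 : ∀ c, 0 ≤ mψ c := fun c => mass_nonneg _ _ hw _ _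
  have hW0 : 0 ≤ W := Finset.sum_nonneg fun ω _ => hw ω
  have hqψ : ∀ p : S × T, q p ≤ mψ p.2 := by
    intro p
    refine Finset.sum_le_sum_of_subset_of_nonneg ?_ (fun ω _ _ => hw ω)
    intro ω hω
    rw [Finset.mem_filter] at hω ⊢
    exact ⟨hω.1, by rw [← hω.2]⟩
  -- row sums
  have hrowsum : ∀ s, mφ s = ∑ p ∈ P.filter (fun p => p.1 = s), q p := by
    intro s
    simp only [hmφdef]
    rw [← Finset.sum_fiberwise_of_maps_to (g := fun ω => (φ ω, ψ ω))
      (t := P.filter (fun p => p.1 = s)) (fun ω hω => by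
        rw [Finset.mem_filter] at hω ⊢
        exact ⟨Finset.mem_image_of_mem _ hω.1, hω.2⟩) w]
    refine Finset.sum_congr rfl fun p hp => ?_
    rw [Finset.mem_filter] at hp
    rw [Finset.filter_filter]
    refine Finset.sum_congr (Finset.filter_congr fun ω _ => ?_) fun _ _ => rfl
    constructor
    · rintro ⟨_, h2⟩; exact h2
    · intro h2; exact ⟨by rw [show φ ω = (φ ω, ψ ω).1 from rfl, h2, hp.2], h2⟩
  have hcolsum : ∀ c, mψ c = ∑ p ∈ P.filter (fun p => p.2 = c), q p := by
    intro c
    simp only [hmψdef]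
    rw [← Finset.sum_fiberwise_of_maps_to (g := fun ω => (φ ω, ψ ω))
      (t := P.filter (fun p => p.2 = c)) (fun ω hω => by
        rw [Finset.mem_filter] at hω ⊢
        exact ⟨Finset.mem_image_of_mem _ hω.1, hω.2⟩) w]
    refine Finset.sum_congr rfl fun p hp => ?_
    rw [Finset.mem_filter] at hp
    rw [Finset.filter_filter]
    refine Finset.sum_congr (Finset.filter_congr fun ω _ => ?_) fun _ _ => rfl
    constructor
    · rintro ⟨_, h2⟩; exact h2
    · intro h2; exact ⟨by rw [show ψ ω = (φ ω, ψ ω).2 from rfl, h2, hp.2], h2⟩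
  have hWq : W = ∑ p ∈ P, q p := (mass_total t w _).symm
  have hWφ : W = ∑ s ∈ t.image φ, mφ s := (mass_total t w φ).symm
  have hWψ : W = ∑ c ∈ t.image ψ, mψ c := (mass_total t w ψ).symm
  -- main inequality in x log x form
  have hmain : ∑ s ∈ t.image φ, mφ s * Real.log (mφ s) - W * Real.log W ≤
      (∑ p ∈ P, q p * Real.log (q p)) - ∑ c ∈ t.image ψ, mψ c * Real.log (mψ c) := by
    rcases eq_or_lt_of_le hW0 with hW | hWpos
    · -- all masses vanish
      have hallmass : ∀ (u : Finset Ω), u ⊆ t → ∑ ω ∈ u, w ω = 0 := by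
        intro u hu
        refine le_antisymm ?_ (Finset.sum_nonneg fun ω _ => hw ω)
        rw [hW]
        exact Finset.sum_le_sum_of_subset_of_nonneg hu (fun ω _ _ => hw ω)
      have h1 : ∀ s ∈ t.image φ, mφ s * Real.log (mφ s) = 0 := by
        intro s _
        simp only [hmφdef]
        rw [hallmass _ (Finset.filter_subset _ _)]; ring
      have h2 : ∀ c ∈ t.image ψ, mψ c * Real.log (mψ c) = 0 := by
        intro c _
        simp only [hmψdef]
        rw [hallmass _ (Finset.filter_subset _ _)]; ring
      have h3 : ∀ p ∈ P, q p * Real.log (q p) = 0 := by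
        intro p _
        simp only [hqdef]
        rw [hallmass _ (Finset.filter_subset _ _)]; ring
      rw [Finset.sum_eq_zero h1, Finset.sum_eq_zero h2, Finset.sum_eq_zero h3, ← hW]
      simp
    · -- W > 0
      have hrow : ∀ s ∈ t.image φ, mφ s * Real.log (mφ s / W) ≤
          ∑ p ∈ P.filter (fun p => p.1 = s), q p * Real.log (q p / mψ p.2) := by
        intro s _
        have hls := logSum (P.filter (fun p => p.1 = s)) q (fun p => mψ p.2)
          (fun p _ => hq0 p) (fun p _ => hmψ0 p.2)
          (fun p _ h => le_antisymm (h ▸ hqψ p) (hq0 p))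
        rw [← hrowsum s] at hls
        refine le_trans ?_ hls
        rcases eq_or_lt_of_le (hmφ0 s) with h0 | h0
        · rw [← h0]; simp
        · -- Bs > 0 and Bs ≤ W
          have hqpos : ∃ p ∈ P.filter (fun p => p.1 = s), 0 < q p := by
            by_contra hcon
            push_neg at hcon
            have : mφ s = 0 := by
              rw [hrowsum s]
              exact Finset.sum_eq_zero fun p hp =>
                le_antisymm (hcon p hp) (hq0 p)
            rw [this] at h0; exact lt_irrefl _ h0
          obtain ⟨p₀, hp₀, hq₀⟩ := hqpos
          set Bs := ∑ p ∈ P.filter (fun p => p.1 = s), mψ p.2 with hBs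
          have hBspos : 0 < Bs :=
            lt_of_lt_of_le (lt_of_lt_of_le hq₀ (hqψ p₀))
              (Finset.single_le_sum (fun p _ => hmψ0 p.2) hp₀)
          have hBsle : Bs ≤ W := by
            have hinj : ∀ x ∈ P.filter (fun p => p.1 = s),
                ∀ y ∈ P.filter (fun p => p.1 = s), x.2 = y.2 → x = y := by
              intro x hx y hy hxy
              rw [Finset.mem_filter] at hx hy
              exact Prod.ext_iff.2 ⟨hx.2.trans hy.2.symm, hxy⟩
            rw [hBs, ← Finset.sum_image (f := mψ) hinj, hWψ]
            refine Finset.sum_le_sum_of_subset_of_nonneg ?_ (fun c _ _ => hmψ0 c)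
            intro c hc
            obtain ⟨p, hp, rfl⟩ := Finset.mem_image.1 hc
            have hpP : p ∈ P := (Finset.mem_filter.1 hp).1
            obtain ⟨ω, hω, rfl⟩ := Finset.mem_image.1 hpP
            exact Finset.mem_image_of_mem _ hω
          refine mul_le_mul_of_nonneg_left ?_ (hmφ0 s)
          exact Real.log_le_log (div_pos h0 hWpos)
            (div_le_div_of_nonneg_left (hmφ0 s) hBspos hBsle)
      -- sum over rows
      have hsum := Finset.sum_le_sum hrow
      have hL : ∑ s ∈ t.image φ, mφ s * Real.log (mφ s / W) =
          ∑ s ∈ t.image φ, mφ s * Real.log (mφ s) - W * Real.log W := by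
        have hterm : ∀ s ∈ t.image φ, mφ s * Real.log (mφ s / W) =
            mφ s * Real.log (mφ s) - mφ s * Real.log W := by
          intro s _
          rcases eq_or_lt_of_le (hmφ0 s) with h0 | h0
          · rw [← h0]; ring
          · rw [Real.log_div h0.ne' hWpos.ne']; ring
        rw [Finset.sum_congr rfl hterm, Finset.sum_sub_distrib, ← Finset.sum_mul, ← hWφ]
      have hR1 : ∑ s ∈ t.image φ,
            ∑ p ∈ P.filter (fun p => p.1 = s), q p * Real.log (q p / mψ p.2)
          = ∑ p ∈ P, q p * Real.log (q p / mψ p.2) := by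
        refine Finset.sum_fiberwise_of_maps_to (fun p hp => ?_) _
        obtain ⟨ω, hω, rfl⟩ := Finset.mem_image.1 hp
        exact Finset.mem_image_of_mem _ hω
      have hR2 : ∑ p ∈ P, q p * Real.log (q p / mψ p.2)
          = (∑ p ∈ P, q p * Real.log (q p)) - ∑ p ∈ P, q p * Real.log (mψ p.2) := by
        rw [← Finset.sum_sub_distrib]
        refine Finset.sum_congr rfl fun p _ => ?_
        rcases eq_or_lt_of_le (hq0 p) with h0 | h0
        · rw [← h0]; ring
        · have hm : 0 < mψ p.2 := lt_of_lt_of_le h0 (hqψ p)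
          rw [Real.log_div h0.ne' hm.ne']; ring
      have hR3 : ∑ p ∈ P, q p * Real.log (mψ p.2)
          = ∑ c ∈ t.image ψ, mψ c * Real.log (mψ c) := by
        rw [← Finset.sum_fiberwise_of_maps_to (g := Prod.snd) (t := t.image ψ)
          (fun p hp => by
            obtain ⟨ω, hω, rfl⟩ := Finset.mem_image.1 hp
            exact Finset.mem_image_of_mem _ hω) (fun p => q p * Real.log (mψ p.2))]
        refine Finset.sum_congr rfl fun c _ => ?_
        have hterm : ∀ p ∈ P.filter (fun p => p.2 = c), q p * Real.log (mψ p.2)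
            = q p * Real.log (mψ c) := by
          intro p hp; rw [(Finset.mem_filter.1 hp).2]
        rw [Finset.sum_congr rfl hterm, ← Finset.sum_mul, ← hcolsum c]
      rw [hL, hR1, hR2, hR3] at hsum
      linarith
  -- convert to negMulLog form
  have e1 : dentOn t w (fun ω => (φ ω, ψ ω)) = -∑ p ∈ P, q p * Real.log (q p) := by
    rw [dentOn, ← Finset.sum_neg_distrib]
    exact Finset.sum_congr rfl fun p _ => by rw [Real.negMulLog]; ring
  have e2 : dentOn t w φ = -∑ s ∈ t.image φ, mφ s * Real.log (mφ s) := by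
    rw [dentOn, ← Finset.sum_neg_distrib]
    exact Finset.sum_congr rfl fun s _ => by rw [Real.negMulLog]; ring
  have e3 : dentOn t w ψ = -∑ c ∈ t.image ψ, mψ c * Real.log (mψ c) := by
    rw [dentOn, ← Finset.sum_neg_distrib]
    exact Finset.sum_congr rfl fun c _ => by rw [Real.negMulLog]; ring
  rw [e1, e2, e3, Real.negMulLog]
  nlinarith [hmain]

/-- Submodularity: conditioning on a finer partition gives smaller conditional entropy. -/
lemma dent_submod (w : Ω → ℝ) (hw : ∀ ω, 0 ≤ w ω) (U : Ω → S) (σ : S → T) (Cc : Ω → R) :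
    dent w (fun ω => (U ω, Cc ω)) + dent w (fun ω => σ (U ω)) ≤
      dent w (fun ω => (σ (U ω), Cc ω)) + dent w U := by
  classical
  have eq1 : dent w (fun ω => (U ω, Cc ω)) =
      dent w (fun ω => (σ (U ω), (U ω, Cc ω))) :=
    dent_congr w hw _ _ Prod.snd (fun ω => rfl)
      (fun p => (σ p.1, p)) (fun ω => rfl)
  have eq2 : dent w U = dent w (fun ω => (σ (U ω), U ω)) :=
    dent_congr w hw _ _ Prod.snd (fun ω => rfl)
      (fun u => (σ u, u)) (fun ω => rfl)
  rw [eq1, eq2, dent_pair_decomp w (fun ω => σ (U ω)) (fun ω => (U ω, Cc ω)),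
    dent_pair_decomp w (fun ω => σ (U ω)) Cc,
    dent_pair_decomp w (fun ω => σ (U ω)) U]
  have hA : dent w (fun ω => σ (U ω)) = ∑ a ∈ Finset.univ.image (fun ω => σ (U ω)),
      Real.negMulLog (∑ ω ∈ Finset.univ.filter (fun ω => σ (U ω) = a), w ω) := rfl
  rw [hA, ← Finset.sum_add_distrib, ← Finset.sum_add_distrib]
  refine Finset.sum_le_sum fun a _ => ?_
  have := dentOn_pair_ge (Finset.univ.filter (fun ω => σ (U ω) = a)) w hw U Cc
  linarith

/-- Transport along an equivalence of the base space. -/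
lemma dent_equiv_comp {Ω' : Type*} [Fintype Ω'] (e : Ω' ≃ Ω) (w : Ω → ℝ) (φ : Ω → S) :
    dent (fun ω' => w (e ω')) (fun ω' => φ (e ω')) = dent w φ := by
  classical
  unfold dent dentOn
  have himg : Finset.univ.image (fun ω' => φ (e ω')) = Finset.univ.image φ := by
    ext s
    simp only [Finset.mem_image, Finset.mem_univ, true_and]
    constructor
    · rintro ⟨ω', h⟩; exact ⟨e ω', h⟩
    · rintro ⟨ω, h⟩; exact ⟨e.symm ω, by simpa using h⟩
  rw [himg]
  refine Finset.sum_congr rfl fun s _ => ?_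
  congr 1
  rw [Finset.sum_filter, Finset.sum_filter]
  exact Fintype.sum_equiv e _ _ (fun ω' => rfl)

end dent

section prod

variable {Ω₁ Ω₂ : Type*} [Fintype Ω₁] [Fintype Ω₂] [Nonempty Ω₁] [Nonempty Ω₂]
variable {S T : Type*} [DecidableEq S] [DecidableEq T]

lemma dent_fst (w₁ : Ω₁ → ℝ) (w₂ : Ω₂ → ℝ) (hW₂ : ∑ y, w₂ y = 1) (u : Ω₁ → S) :
    dent (fun p : Ω₁ × Ω₂ => w₁ p.1 * w₂ p.2) (fun p => u p.1) = dent w₁ u := by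
  classical
  unfold dent dentOn
  have himg : (Finset.univ : Finset (Ω₁ × Ω₂)).image (fun p => u p.1) =
      Finset.univ.image u := by
    ext s
    simp only [Finset.mem_image, Finset.mem_univ, true_and]
    constructor
    · rintro ⟨p, h⟩; exact ⟨p.1, h⟩
    · rintro ⟨x, h⟩; exact ⟨(x, Classical.arbitrary Ω₂), h⟩
  rw [himg]
  refine Finset.sum_congr rfl fun s _ => ?_
  congr 1
  rw [Finset.sum_filter, Finset.sum_filter, Fintype.sum_prod_type]
  calc ∑ x, ∑ y, (if u x = s then w₁ x * w₂ y else 0)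
      = ∑ x, (if u x = s then w₁ x else 0) := by
        refine Finset.sum_congr rfl fun x _ => ?_
        by_cases h : u x = s
        · simp only [h, if_true, ← Finset.mul_sum, hW₂, mul_one]
        · simp [h]

lemma dent_snd (w₁ : Ω₁ → ℝ) (w₂ : Ω₂ → ℝ) (hW₁ : ∑ x, w₁ x = 1) (b : Ω₂ → S) :
    dent (fun p : Ω₁ × Ω₂ => w₁ p.1 * w₂ p.2) (fun p => b p.2) = dent w₂ b := by
  classical
  unfold dent dentOn
  have himg : (Finset.univ : Finset (Ω₁ × Ω₂)).image (fun p => b p.2) =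
      Finset.univ.image b := by
    ext s
    simp only [Finset.mem_image, Finset.mem_univ, true_and]
    constructor
    · rintro ⟨p, h⟩; exact ⟨p.2, h⟩
    · rintro ⟨y, h⟩; exact ⟨(Classical.arbitrary Ω₁, y), h⟩
  rw [himg]
  refine Finset.sum_congr rfl fun s _ => ?_
  congr 1
  rw [Finset.sum_filter, Finset.sum_filter, Fintype.sum_prod_type]
  calc ∑ x, ∑ y, (if b y = s then w₁ x * w₂ y else 0)
      = ∑ x, w₁ x * ∑ y, (if b y = s then w₂ y else 0) := by
        refine Finset.sum_congr rfl fun x _ => ?_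
        rw [Finset.mul_sum]
        refine Finset.sum_congr rfl fun y _ => ?_
        by_cases h : b y = s <;> simp [h]
    _ = ∑ y, (if b y = s then w₂ y else 0) := by
        rw [← Finset.sum_mul, hW₁, one_mul]

lemma dent_indep (w₁ : Ω₁ → ℝ) (w₂ : Ω₂ → ℝ)
    (hW₁ : ∑ x, w₁ x = 1) (hW₂ : ∑ y, w₂ y = 1) (u : Ω₁ → S) (b : Ω₂ → T) :
    dent (fun p : Ω₁ × Ω₂ => w₁ p.1 * w₂ p.2) (fun p => (u p.1, b p.2)) =
      dent w₁ u + dent w₂ b := by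
  classical
  unfold dent dentOn
  have himg : (Finset.univ : Finset (Ω₁ × Ω₂)).image (fun p => (u p.1, b p.2)) =
      (Finset.univ.image u) ×ˢ (Finset.univ.image b) := by
    ext st
    simp only [Finset.mem_image, Finset.mem_univ, true_and, Finset.mem_product,
      Prod.ext_iff]
    constructor
    · rintro ⟨p, h1, h2⟩; exact ⟨⟨p.1, h1⟩, ⟨p.2, h2⟩⟩
    · rintro ⟨⟨x, h1⟩, ⟨y, h2⟩⟩; exact ⟨(x, y), h1, h2⟩
  have hmass : ∀ st : S × T,
      (∑ p ∈ Finset.univ.filter (fun p : Ω₁ × Ω₂ => (u p.1, b p.2) = st),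
        w₁ p.1 * w₂ p.2) =
      (∑ x ∈ Finset.univ.filter (fun x => u x = st.1), w₁ x) *
        (∑ y ∈ Finset.univ.filter (fun y => b y = st.2), w₂ y) := by
    intro st
    rw [Finset.sum_filter, Finset.sum_filter, Finset.sum_filter,
      Fintype.sum_prod_type, Finset.sum_mul_sum]
    refine Finset.sum_congr rfl fun x _ => Finset.sum_congr rfl fun y _ => ?_
    by_cases h1 : u x = st.1 <;> by_cases h2 : b y = st.2 <;>
      simp [h1, h2, Prod.ext_iff]
  rw [himg]
  rw [Finset.sum_congr rfl (fun st _ => by rw [hmass st])]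
  rw [Finset.sum_product]
  have hmu : ∑ x ∈ Finset.univ.image u,
      (∑ ω ∈ Finset.univ.filter (fun ω => u ω = x), w₁ ω) = 1 := by
    rw [mass_total]; exact hW₁
  have hmb : ∑ y ∈ Finset.univ.image b,
      (∑ ω ∈ Finset.univ.filter (fun ω => b ω = y), w₂ ω) = 1 := by
    rw [mass_total]; exact hW₂
  calc ∑ s ∈ Finset.univ.image u, ∑ c ∈ Finset.univ.image b,
        Real.negMulLog ((∑ ω ∈ Finset.univ.filter (fun ω => u ω = s), w₁ ω) *
          (∑ ω ∈ Finset.univ.filter (fun ω => b ω = c), w₂ ω))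
      = ∑ s ∈ Finset.univ.image u, ∑ c ∈ Finset.univ.image b,
        ((∑ ω ∈ Finset.univ.filter (fun ω => b ω = c), w₂ ω) *
            Real.negMulLog (∑ ω ∈ Finset.univ.filter (fun ω => u ω = s), w₁ ω) +
          (∑ ω ∈ Finset.univ.filter (fun ω => u ω = s), w₁ ω) *
            Real.negMulLog (∑ ω ∈ Finset.univ.filter (fun ω => b ω = c), w₂ ω)) := by
        exact Finset.sum_congr rfl fun s _ => Finset.sum_congr rfl fun c _ =>
          Real.negMulLog_mul _ _
    _ = ∑ s ∈ Finset.univ.image u,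
          (Real.negMulLog (∑ ω ∈ Finset.univ.filter (fun ω => u ω = s), w₁ ω) +
            (∑ ω ∈ Finset.univ.filter (fun ω => u ω = s), w₁ ω) *
              (∑ c ∈ Finset.univ.image b,
                Real.negMulLog (∑ ω ∈ Finset.univ.filter (fun ω => b ω = c), w₂ ω))) := by
        refine Finset.sum_congr rfl fun s _ => ?_
        rw [Finset.sum_add_distrib, ← Finset.sum_mul, hmb, one_mul, Finset.mul_sum]
    _ = _ := by
        rw [Finset.sum_add_distrib, ← Finset.sum_mul, hmu, one_mul]

lemma discrete_chain (w₁ : Ω₁ → ℝ) (w₂ : Ω₂ → ℝ)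
    (hw₁ : ∀ x, 0 ≤ w₁ x) (hw₂ : ∀ y, 0 ≤ w₂ y)
    (hW₁ : ∑ x, w₁ x = 1) (hW₂ : ∑ y, w₂ y = 1)
    (u : Ω₁ → ℝ) (b : Ω₂ → ℤ) (σ : ℝ → ℤ) (Cc : Ω₁ × Ω₂ → ℤ)
    (h3 : ∀ c : ℤ, ∃ Tf : Finset ℤ, Tf.card ≤ 3 ∧
      ∀ p : Ω₁ × Ω₂, Cc p = c → σ (u p.1) ∈ Tf)
    (h2 : ∀ s : ℝ × ℤ, ∃ Tf : Finset ℤ, Tf.card ≤ 2 ∧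
      ∀ p : Ω₁ × Ω₂, (u p.1, Cc p) = s → b p.2 ∈ Tf) :
    dent w₁ (fun x => σ (u x)) + dent w₂ b ≤
      dent (fun p : Ω₁ × Ω₂ => w₁ p.1 * w₂ p.2) Cc + Real.log 6 := by
  classical
  set w : Ω₁ × Ω₂ → ℝ := fun p => w₁ p.1 * w₂ p.2 with hwdef
  have hw : ∀ p, 0 ≤ w p := fun p => mul_nonneg (hw₁ p.1) (hw₂ p.2)
  have hWtot : ∑ p, w p = 1 := by
    rw [hwdef, Fintype.sum_prod_type]
    calc ∑ x, ∑ y, w₁ x * w₂ y = ∑ x, w₁ x * ∑ y, w₂ y := by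
          exact Finset.sum_congr rfl fun x _ => (Finset.mul_sum _ _ _).symm
      _ = 1 := by rw [hW₂]; simpa using hW₁
  have c1 : dent w (fun p => (u p.1, b p.2)) = dent w₁ u + dent w₂ b :=
    dent_indep w₁ w₂ hW₁ hW₂ u b
  have c2 : dent w (fun p => (u p.1, b p.2)) ≤
      dent w (fun p => ((u p.1, Cc p), b p.2)) :=
    dent_mono w hw _ _ (fun q => (q.1.1, q.2)) (fun p => rfl)
  have c3 : dent w (fun p => ((u p.1, Cc p), b p.2)) ≤
      dent w (fun p => (u p.1, Cc p)) + (∑ p, w p) * Real.log (2 : ℕ) :=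
    dent_pair_le w hw (fun p => (u p.1, Cc p)) (fun p => b p.2) 2 (by norm_num)
      (fun s => by
        obtain ⟨Tf, hcard, hmem⟩ := h2 s
        exact ⟨Tf, hcard, fun p hp => hmem p hp⟩)
  have c4 : dent w (fun p => (u p.1, Cc p)) + dent w (fun p => σ (u p.1)) ≤
      dent w (fun p => (σ (u p.1), Cc p)) + dent w (fun p => u p.1) :=
    dent_submod w hw (fun p => u p.1) σ Cc
  have c5 : dent w (fun p => (σ (u p.1), Cc p)) =
      dent w (fun p => (Cc p, σ (u p.1))) :=
    dent_congr w hw _ _ Prod.swap (fun p => rfl) Prod.swap (fun p => rfl)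
  have c6 : dent w (fun p => (Cc p, σ (u p.1))) ≤
      dent w Cc + (∑ p, w p) * Real.log (3 : ℕ) :=
    dent_pair_le w hw Cc (fun p => σ (u p.1)) 3 (by norm_num)
      (fun c => by
        obtain ⟨Tf, hcard, hmem⟩ := h3 c
        exact ⟨Tf, hcard, fun p hp => hmem p hp⟩)
  have cfst : dent w (fun p => u p.1) = dent w₁ u := dent_fst w₁ w₂ hW₂ u
  have cfst' : dent w (fun p => σ (u p.1)) = dent w₁ (fun x => σ (u x)) := by
    have := dent_fst w₁ w₂ hW₂ (fun x => σ (u x))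
    exact this
  have hlog : Real.log 6 = Real.log 2 + Real.log 3 := by
    rw [show (6:ℝ) = 2 * 3 by norm_num, Real.log_mul (by norm_num) (by norm_num)]
  rw [hWtot] at c3 c6
  have h2' : Real.log ((2:ℕ):ℝ) = Real.log 2 := by norm_num
  have h3' : Real.log ((3:ℕ):ℝ) = Real.log 3 := by norm_num
  rw [h2', one_mul] at c3
  rw [h3', one_mul] at c6
  linarith

end prod

section geometry

/-- Fiber bound: `⌊u/rᵐ⌋` takes at most 3 values on a fiber of `⌊Z/r^{m+n}⌋`. -/
lemma floor_bound_A (r : ℝ) (hr0 : 0 < r) (hr1 : r < 1) (m n : ℕ) (c : ℤ)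
    (u0 v0 : ℝ) (hv0 : 0 ≤ v0) (hv1 : v0 < 1)
    (hc : ⌊(u0 + r ^ m * v0) / r ^ (m + n)⌋ = c) :
    ⌊u0 / r ^ m⌋ ∈ ({⌊(c:ℝ) * r ^ n⌋ - 1, ⌊(c:ℝ) * r ^ n⌋, ⌊(c:ℝ) * r ^ n⌋ + 1} :
      Finset ℤ) := by
  have hrm : (0:ℝ) < r ^ m := pow_pos hr0 m
  have hrn : (0:ℝ) < r ^ n := pow_pos hr0 n
  have hρ : (0:ℝ) < r ^ (m + n) := pow_pos hr0 _
  have hρeq : r ^ (m + n) = r ^ m * r ^ n := pow_add r m n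
  have hrn1 : r ^ n ≤ 1 := pow_le_one₀ hr0.le hr1.le
  obtain ⟨h1, h2⟩ := Int.floor_eq_iff.1 hc
  have hZ1 : (c:ℝ) * r ^ (m + n) ≤ u0 + r ^ m * v0 := (le_div_iff₀ hρ).1 h1
  have hZ2 : u0 + r ^ m * v0 < ((c:ℝ) + 1) * r ^ (m + n) := ((div_lt_iff₀ hρ).1 h2)
  rw [hρeq] at hZ1 hZ2
  set x := ⌊(c:ℝ) * r ^ n⌋ with hx
  have hxle : (x:ℝ) ≤ (c:ℝ) * r ^ n := Int.floor_le _
  have hlow : x - 1 ≤ ⌊u0 / r ^ m⌋ := by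
    rw [Int.le_floor]
    push_cast
    rw [le_div_iff₀ hrm]
    nlinarith
  have hhigh : ⌊u0 / r ^ m⌋ ≤ x + 1 := by
    have hle : u0 / r ^ m ≤ (c:ℝ) * r ^ n + 1 := by
      rw [div_le_iff₀ hrm]
      nlinarith
    have := Int.floor_le_floor hle
    rwa [show ((c:ℝ) * r ^ n + 1) = (c:ℝ) * r ^ n + ((1:ℤ):ℝ) by norm_num,
      Int.floor_add_intCast] at this
  simp only [Finset.mem_insert, Finset.mem_singleton]
  omega

/-- Fiber bound: `⌊v/rⁿ⌋` takes at most 2 values once `u` and `⌊Z/r^{m+n}⌋` are fixed. -/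
lemma floor_bound_B (r : ℝ) (hr0 : 0 < r) (m n : ℕ) (c : ℤ) (u0 v0 : ℝ)
    (hc : ⌊(u0 + r ^ m * v0) / r ^ (m + n)⌋ = c) :
    ⌊v0 / r ^ n⌋ ∈ ({⌊(c:ℝ) - u0 / r ^ (m + n)⌋, ⌊(c:ℝ) - u0 / r ^ (m + n)⌋ + 1} :
      Finset ℤ) := by
  have hrm : (0:ℝ) < r ^ m := pow_pos hr0 m
  have hrn : (0:ℝ) < r ^ n := pow_pos hr0 n
  have hρ : (0:ℝ) < r ^ (m + n) := pow_pos hr0 _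
  have hρeq : r ^ (m + n) = r ^ m * r ^ n := pow_add r m n
  obtain ⟨h1, h2⟩ := Int.floor_eq_iff.1 hc
  have hZ1 : (c:ℝ) * r ^ (m + n) ≤ u0 + r ^ m * v0 := (le_div_iff₀ hρ).1 h1
  have hZ2 : u0 + r ^ m * v0 < ((c:ℝ) + 1) * r ^ (m + n) := ((div_lt_iff₀ hρ).1 h2)
  have e1 : v0 / r ^ n = (r ^ m * v0) / r ^ (m + n) := by
    rw [hρeq, mul_div_mul_left _ _ hrm.ne']
  set t' := (c:ℝ) - u0 / r ^ (m + n) with ht'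
  set y := ⌊t'⌋ with hy
  have ht'eq : t' = ((c:ℝ) * r ^ (m + n) - u0) / r ^ (m + n) := by
    rw [ht']; field_simp
  have hlow : y ≤ ⌊v0 / r ^ n⌋ := by
    refine Int.floor_le_floor ?_
    rw [e1, ht'eq]
    exact (div_le_div_iff_of_pos_right hρ).2 (by linarith)
  have hup : v0 / r ^ n < t' + 1 := by
    have ht'1 : t' + 1 = (((c:ℝ) + 1) * r ^ (m + n) - u0) / r ^ (m + n) := by
      rw [ht']; field_simp; ring
    rw [e1, ht'1]
    exact (div_lt_div_iff_of_pos_right hρ).2 (by linarith)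
  have hhigh : ⌊v0 / r ^ n⌋ ≤ y + 1 := by
    have hf1 : (⌊v0 / r ^ n⌋ : ℝ) ≤ v0 / r ^ n := Int.floor_le _
    have hf2 : t' < (y:ℝ) + 1 := Int.lt_floor_add_one t'
    have : (⌊v0 / r ^ n⌋ : ℝ) < (y:ℝ) + 2 :=
      calc (⌊v0 / r ^ n⌋ : ℝ) ≤ v0 / r ^ n := hf1
        _ < t' + 1 := hup
        _ < (y:ℝ) + 2 := by linarith
    have : ⌊v0 / r ^ n⌋ < y + 2 := by exact_mod_cast this
    omega
  simp only [Finset.mem_insert, Finset.mem_singleton]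
  omega

end geometry

section ifs

variable {Λ : Type*} [Fintype Λ]

lemma wordComp_eq_sum (f : Λ → ℝ → ℝ) (r : ℝ) (a : Λ → ℝ)
    (hf : ∀ i x, f i x = r * x + a i) (n : ℕ) :
    ∀ i : Fin n → Λ, wordComp f n i 0 = ∑ k : Fin n, r ^ (k : ℕ) * a (i k) := by
  induction n with
  | zero => intro i; simp [wordComp]
  | succ n ih =>
    intro i
    show f (i 0) (wordComp f n (fun k => i k.succ) 0) = _
    rw [hf, ih, Fin.sum_univ_succ, Finset.mul_sum]
    simp only [Fin.val_zero, pow_zero, one_mul, Fin.val_succ]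
    rw [add_comm]
    congr 1
    refine Finset.sum_congr rfl fun k _ => ?_
    rw [pow_succ]
    ring

lemma wordComp_mem (f : Λ → ℝ → ℝ) (X : Set ℝ)
    (hXinv : X = ⋃ i : Λ, f i '' X) (h0X : (0:ℝ) ∈ X) (n : ℕ) :
    ∀ i : Fin n → Λ, wordComp f n i 0 ∈ X := by
  induction n with
  | zero => intro i; exact h0X
  | succ n ih =>
    intro i
    show f (i 0) (wordComp f n (fun k => i k.succ) 0) ∈ X
    rw [hXinv]
    exact Set.mem_iUnion.2 ⟨i 0, Set.mem_image_of_mem _ (ih _)⟩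

lemma wordComp_split (f : Λ → ℝ → ℝ) (r : ℝ) (a : Λ → ℝ)
    (hf : ∀ i x, f i x = r * x + a i) (m n : ℕ) (i : Fin (m + n) → Λ) :
    wordComp f (m + n) i 0 =
      wordComp f m (fun k => i (Fin.castAdd n k)) 0 +
        r ^ m * wordComp f n (fun k => i (Fin.natAdd m k)) 0 := by
  rw [wordComp_eq_sum f r a hf, wordComp_eq_sum f r a hf, wordComp_eq_sum f r a hf,
    Fin.sum_univ_add]
  have h1 : (∑ k : Fin m, r ^ ((Fin.castAdd n k : Fin (m+n)) : ℕ) * a (i (Fin.castAdd n k)))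
      = ∑ k : Fin m, r ^ (k : ℕ) * a (i (Fin.castAdd n k)) :=
    Finset.sum_congr rfl fun k _ => by rw [Fin.coe_castAdd]
  have h2 : (∑ k : Fin n, r ^ ((Fin.natAdd m k : Fin (m+n)) : ℕ) * a (i (Fin.natAdd m k)))
      = r ^ m * ∑ k : Fin n, r ^ (k : ℕ) * a (i (Fin.natAdd m k)) := by
    rw [Finset.mul_sum]
    exact Finset.sum_congr rfl fun k _ => by rw [Fin.coe_natAdd, pow_add]; ring
  rw [h1, h2]

/-- The bridge between `entI` of `μiter` and discrete entropy. -/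
lemma entI_eq_dent (f : Λ → ℝ → ℝ) (n : ℕ) (hcard : 0 < Fintype.card Λ)
    (ε : ℝ) (hε : 0 < ε) :
    entI (μiter f n) ε =
      dent (fun _ : Fin n → Λ => ((Fintype.card Λ : ℝ) ^ n)⁻¹)
        (fun i => ⌊wordComp f n i 0 / ε⌋) := by
  classical
  set N := Fintype.card Λ with hN
  set φ : (Fin n → Λ) → ℤ := fun i => ⌊wordComp f n i 0 / ε⌋ with hφ
  have hNR : ((N:ℝ) ^ n) ≠ 0 := by positivity
  have key : ∀ k : ℤ,
      ((μiter f n) (Set.Ico ((k:ℝ) * ε) (((k:ℝ) + 1) * ε))).toReal =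
        ∑ i ∈ Finset.univ.filter (fun i => φ i = k), ((N:ℝ) ^ n)⁻¹ := by
    intro k
    have hms : MeasurableSet (Set.Ico ((k:ℝ) * ε) (((k:ℝ) + 1) * ε)) :=
      measurableSet_Ico
    rw [μiter, MeasureTheory.Measure.smul_apply, smul_eq_mul,
      MeasureTheory.Measure.finset_sum_apply]
    have hdirac : ∀ i : Fin n → Λ,
        (MeasureTheory.Measure.dirac (wordComp f n i 0))
          (Set.Ico ((k:ℝ) * ε) (((k:ℝ) + 1) * ε)) =
        (if φ i = k then (1 : ENNReal) else 0) := by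
      intro i
      rw [MeasureTheory.Measure.dirac_apply' _ hms]
      have hiff : wordComp f n i 0 ∈ Set.Ico ((k:ℝ) * ε) (((k:ℝ) + 1) * ε) ↔
          φ i = k := by
        rw [Set.mem_Ico, hφ]
        simp only
        rw [Int.floor_eq_iff, le_div_iff₀ hε, div_lt_iff₀ hε]
      by_cases h : φ i = k
      · rw [if_pos h, Set.indicator_of_mem (hiff.2 h)]; rfl
      · rw [if_neg h, Set.indicator_of_notMem (fun hmem => h (hiff.1 hmem))]
    rw [Finset.sum_congr rfl (fun i _ => hdirac i)]
    rw [ENNReal.toReal_mul, ENNReal.toReal_sum (fun i _ => by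
      split_ifs <;> simp)]
    have : ∀ i : Fin n → Λ, ((if φ i = k then (1:ENNReal) else 0)).toReal =
        (if φ i = k then (1:ℝ) else 0) := by
      intro i; split_ifs <;> simp
    rw [Finset.sum_congr rfl (fun i _ => this i)]
    rw [Finset.sum_filter]
    have hsc : ((((N:ENNReal)) ^ n)⁻¹).toReal = ((N:ℝ) ^ n)⁻¹ := by
      rw [ENNReal.toReal_inv, ENNReal.toReal_pow, ENNReal.toReal_natCast]
    rw [hsc, Finset.mul_sum]
    refine Finset.sum_congr rfl fun i _ => ?_
    split_ifs <;> simp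
  rw [entI]
  rw [tsum_eq_sum (s := Finset.univ.image φ) (fun k hk => by
    rw [key k]
    have : Finset.univ.filter (fun i => φ i = k) = ∅ := by
      rw [Finset.filter_eq_empty_iff]
      intro i _
      exact fun h => hk (Finset.mem_image.2 ⟨i, Finset.mem_univ i, h⟩)
    rw [this, Finset.sum_empty, Real.negMulLog_zero])]
  exact Finset.sum_congr rfl fun k _ => by rw [key k]

/-- Entropy is at most `log` of the number of points. -/
lemma dent_le_log {Ω : Type*} [Fintype Ω] [Nonempty Ω] {S : Type*} [DecidableEq S]
    (w : Ω → ℝ) (hw : ∀ ω, 0 ≤ w ω) (hW : ∑ ω, w ω = 1) (φ : Ω → S) :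
    dent w φ ≤ Real.log (Fintype.card Ω) := by
  have h := dentOn_le Finset.univ w hw φ (Fintype.card Ω)
    Fintype.card_pos
    (le_trans (Finset.card_image_le) (by rw [Finset.card_univ]))
  rw [hW] at h
  simpa [dent] using h

end ifs

end EntropyAux

open EntropyAux

/-- For `s_n = H(μ⁽ⁿ⁾, I_{rⁿ})` there is a constant `C` with
`s_{m+n} ≥ s_m + s_n − C`, and hence `s_n/(n log(1/r))` converges. -/
theorem entropy_superadditive_and_limit {Λ : Type*} [Fintype Λ]
    (f : Λ → ℝ → ℝ) (r : ℝ) (a : Λ → ℝ) (hΛ : 2 ≤ Fintype.card Λ)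
    (hr0 : 0 < r) (hr1 : r < 1) (hf : ∀ i x, f i x = r * x + a i)
    (X : Set ℝ) (hXne : X.Nonempty) (hXc : IsCompact X)
    (hXinv : X = ⋃ i : Λ, f i '' X)
    (h0X : (0 : ℝ) ∈ X) (hX01 : X ⊆ Set.Ico 0 1) :
    (∃ C : ℝ, ∀ m n : ℕ,
      entI (μiter f (m + n)) (r ^ (m + n)) ≥
        entI (μiter f m) (r ^ m) + entI (μiter f n) (r ^ n) - C) ∧
    ∃ α : ℝ, Tendsto
      (fun n : ℕ => entI (μiter f n) (r ^ n) / (n * Real.log (1 / r)))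
      atTop (nhds α) := by
  classical
  haveI hNΛ : Nonempty Λ := Fintype.card_pos_iff.1 (by omega)
  set N := Fintype.card Λ with hNdef
  have hNpos : (0:ℝ) < (N:ℝ) := by
    have : 0 < N := by omega
    exact_mod_cast this
  set s : ℕ → ℝ := fun k => entI (μiter f k) (r ^ k) with hs
  have hwsum : ∀ k : ℕ, ∑ _i : Fin k → Λ, ((N:ℝ) ^ k)⁻¹ = 1 := by
    intro k
    rw [Finset.sum_const, Finset.card_univ, Fintype.card_fun, Fintype.card_fin,
      nsmul_eq_mul]
    push_cast
    rw [mul_inv_cancel₀ (by positivity)]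
  have hsd : ∀ k : ℕ, s k = dent (fun _ : Fin k → Λ => ((N:ℝ) ^ k)⁻¹)
      (fun i => ⌊wordComp f k i 0 / r ^ k⌋) := fun k =>
    entI_eq_dent f k (by omega) (r ^ k) (pow_pos hr0 k)
  -- superadditivity
  have hsuper : ∀ m n : ℕ, s m + s n ≤ s (m + n) + Real.log 6 := by
    intro m n
    set u : (Fin m → Λ) → ℝ := fun i => wordComp f m i 0 with hu
    set vb : (Fin n → Λ) → ℝ := fun j => wordComp f n j 0 with hvb
    set σ : ℝ → ℤ := fun x => ⌊x / r ^ m⌋ with hσ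
    set b : (Fin n → Λ) → ℤ := fun j => ⌊vb j / r ^ n⌋ with hb
    set Cc : (Fin m → Λ) × (Fin n → Λ) → ℤ :=
      fun p => ⌊(u p.1 + r ^ m * vb p.2) / r ^ (m + n)⌋ with hCc
    have hvmem : ∀ j, vb j ∈ Set.Ico (0:ℝ) 1 := fun j =>
      hX01 (wordComp_mem f X hXinv h0X n j)
    let E : (Fin m → Λ) × (Fin n → Λ) ≃ (Fin (m + n) → Λ) :=
      (Equiv.sumArrowEquivProdArrow (Fin m) (Fin n) Λ).symm.trans
        (Equiv.arrowCongr finSumFinEquiv (Equiv.refl Λ))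
    have hEapp : ∀ (p : (Fin m → Λ) × (Fin n → Λ)) (x : Fin (m + n)),
        E p x = Sum.elim p.1 p.2 (finSumFinEquiv.symm x) := fun p x => rfl
    have hsplit : ∀ p : (Fin m → Λ) × (Fin n → Λ),
        wordComp f (m + n) (E p) 0 = u p.1 + r ^ m * vb p.2 := by
      intro p
      rw [wordComp_split f r a hf m n (E p)]
      congr 2
      · have : (fun k => E p (Fin.castAdd n k)) = p.1 := by
          funext k
          rw [hEapp, finSumFinEquiv_symm_apply_castAdd]
          rfl
        rw [this]
      · have : (fun k => E p (Fin.natAdd m k)) = p.2 := by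
          funext k
          rw [hEapp, finSumFinEquiv_symm_apply_natAdd]
          rfl
        rw [this]
    have hsm : s m = dent (fun _ : Fin m → Λ => ((N:ℝ) ^ m)⁻¹)
        (fun x => σ (u x)) := hsd m
    have hsn : s n = dent (fun _ : Fin n → Λ => ((N:ℝ) ^ n)⁻¹) b := hsd n
    have hsmn : s (m + n) = dent
        (fun p : (Fin m → Λ) × (Fin n → Λ) => ((N:ℝ) ^ m)⁻¹ * ((N:ℝ) ^ n)⁻¹) Cc := by
      rw [hsd (m + n),
        ← dent_equiv_comp E (fun _ => ((N:ℝ) ^ (m + n))⁻¹)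
          (fun i => ⌊wordComp f (m + n) i 0 / r ^ (m + n)⌋)]
      congr 1
      · funext p
        rw [pow_add, mul_inv]
      · funext p
        rw [hsplit p]
    have h3 : ∀ c : ℤ, ∃ Tf : Finset ℤ, Tf.card ≤ 3 ∧
        ∀ p : (Fin m → Λ) × (Fin n → Λ), Cc p = c → σ (u p.1) ∈ Tf := by
      intro c
      refine ⟨{⌊(c:ℝ) * r ^ n⌋ - 1, ⌊(c:ℝ) * r ^ n⌋, ⌊(c:ℝ) * r ^ n⌋ + 1}, ?_, ?_⟩
      · have h2' : ({⌊(c:ℝ) * r ^ n⌋, ⌊(c:ℝ) * r ^ n⌋ + 1} : Finset ℤ).card ≤ 2 :=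
          le_trans (Finset.card_insert_le _ _) (by simp)
        exact le_trans (Finset.card_insert_le _ _) (by omega)
      · intro p hp
        exact floor_bound_A r hr0 hr1 m n c (u p.1) (vb p.2)
          (hvmem p.2).1 (hvmem p.2).2 hp
    have h2 : ∀ st : ℝ × ℤ, ∃ Tf : Finset ℤ, Tf.card ≤ 2 ∧
        ∀ p : (Fin m → Λ) × (Fin n → Λ), (u p.1, Cc p) = st → b p.2 ∈ Tf := by
      intro st
      refine ⟨{⌊(st.2:ℝ) - st.1 / r ^ (m + n)⌋, ⌊(st.2:ℝ) - st.1 / r ^ (m + n)⌋ + 1},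
        le_trans (Finset.card_insert_le _ _) (by simp), ?_⟩
      intro p hp
      have hp1 : u p.1 = st.1 := congrArg Prod.fst hp
      have hp2 : Cc p = st.2 := congrArg Prod.snd hp
      rw [← hp1]
      exact floor_bound_B r hr0 m n st.2 (u p.1) (vb p.2) hp2
    have hchain := discrete_chain (Ω₁ := Fin m → Λ) (Ω₂ := Fin n → Λ)
      (fun _ => ((N:ℝ) ^ m)⁻¹) (fun _ => ((N:ℝ) ^ n)⁻¹)
      (fun _ => by positivity) (fun _ => by positivity)
      (hwsum m) (hwsum n) u b σ Cc h3 h2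
    rw [hsm, hsn, hsmn]
    exact hchain
  refine ⟨⟨Real.log 6, fun m n => ?_⟩, ?_⟩
  · show s (m + n) ≥ s m + s n - Real.log 6
    have := hsuper m n
    linarith
  -- the limit
  have hub : ∀ k : ℕ, s k ≤ k * Real.log N := by
    intro k
    rw [hsd k]
    have h := dent_le_log (fun _ : Fin k → Λ => ((N:ℝ) ^ k)⁻¹)
      (fun _ => by positivity) (hwsum k) (fun i => ⌊wordComp f k i 0 / r ^ k⌋)
    rwa [Fintype.card_fun, Fintype.card_fin, Nat.cast_pow, Real.log_pow] at h
  have hlogN : 0 ≤ Real.log N := Real.log_nonneg (by exact_mod_cast (by omega : 1 ≤ N))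
  have hlog6 : 0 ≤ Real.log 6 := Real.log_nonneg (by norm_num)
  set uS : ℕ → ℝ := fun k => Real.log 6 - s k with huS
  have hSub : Subadditive uS := by
    intro m n
    have := hsuper m n
    show Real.log 6 - s (m + n) ≤ (Real.log 6 - s m) + (Real.log 6 - s n)
    linarith
  have hbdd : BddBelow (Set.range fun k : ℕ => uS k / k) := by
    refine ⟨-Real.log N, ?_⟩
    rintro x ⟨k, rfl⟩
    rcases Nat.eq_zero_or_pos k with hk | hk
    · subst hk
      simp only [Nat.cast_zero, div_zero]
      linarith
    · have hkR : (0:ℝ) < k := by exact_mod_cast hk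
      rw [le_div_iff₀ hkR]
      have := hub k
      show -Real.log N * k ≤ Real.log 6 - s k
      nlinarith
  have hlim := hSub.tendsto_lim hbdd
  set L := Real.log (1 / r) with hL
  have hLpos : 0 < L := Real.log_pos (one_lt_one_div hr0 hr1)
  refine ⟨0 - hSub.lim * L⁻¹, ?_⟩
  have heq : (fun k : ℕ => s k / (k * L)) =
      fun k : ℕ => Real.log 6 / ((k : ℝ) * L) - (uS k / k) * L⁻¹ := by
    funext k
    have hsk : s k = Real.log 6 - uS k := by rw [huS]; ring
    rw [hsk, sub_div]
    congr 1
    rw [← div_div, div_eq_mul_inv]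
  show Tendsto (fun k : ℕ => s k / (k * L)) atTop (nhds (0 - hSub.lim * L⁻¹))
  rw [heq]
  have t1 : Tendsto (fun k : ℕ => Real.log 6 / ((k : ℝ) * L)) atTop (nhds 0) := by
    have he : (fun k : ℕ => Real.log 6 / ((k : ℝ) * L)) =
        fun k : ℕ => (Real.log 6 / L) * (1 / (k : ℝ)) := by
      funext k
      rw [div_mul_div_comm, mul_one, mul_comm (L) ((k:ℝ))]
    rw [he]
    simpa using tendsto_one_div_atTop_nhds_zero_nat.const_mul (Real.log 6 / L)
  exact t1.sub (hlim.mul_const L⁻¹)
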